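/- With S = {1,2,4} ⊂ ℤ and f(E) = min{|E| − |F| : F finite, {p+S : p ∈ F} pairwise disjoint subsets of E}, for every n ∈ ℕ one has f({1, 2, …, 4n}) = 3n. -/

import Mathlib

/-- The set `S = {1,2,4} ⊆ ℤ`. -/
def Sset : Finset ℤ := {1, 2, 4}

/-- `f(E) = min { |E| − |F| : F finite, the translates p+S (p ∈ F) are pairwise
disjoint subsets of E }`. -/
noncomputable def fmin (E : Finset ℤ) : ℕ :=
  sInf {m : ℕ | ∃ F : Finset ℤ,
    (∀ p ∈ F, Sset.image (fun s => p + s) ⊆ E) ∧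
    (∀ p ∈ F, ∀ q ∈ F, p ≠ q →
      Disjoint (Sset.image (fun s => p + s)) (Sset.image (fun s => q + s))) ∧
    m = E.card - F.card}

lemma card_E (n : ℕ) : (Finset.Icc (1 : ℤ) (4 * n)).card = 4 * n := by
  rw [Int.card_Icc]; omega

lemma mem_transl (p x : ℤ) :
    x ∈ Sset.image (fun s => p + s) ↔ x = p + 1 ∨ x = p + 2 ∨ x = p + 4 := by
  simp only [Sset, Finset.mem_image, Finset.mem_insert, Finset.mem_singleton]
  constructor
  · rintro ⟨s, hs, rfl⟩; rcases hs with rfl | rfl | rfl <;> omega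
  · rintro (rfl | rfl | rfl)
    exacts [⟨1, by norm_num⟩, ⟨2, by norm_num⟩, ⟨4, by norm_num⟩]

lemma not_disjoint_of_close (p q : ℤ) (h1 : p ≠ q) (h2 : p - q ≤ 3) (h3 : q - p ≤ 3) :
    ¬ Disjoint (Sset.image (fun s => p + s)) (Sset.image (fun s => q + s)) := by
  rw [Finset.not_disjoint_iff]
  rcases (by omega : q - p = 1 ∨ q - p = 2 ∨ q - p = 3 ∨ p - q = 1 ∨ p - q = 2 ∨ p - q = 3)
    with h | h | h | h | h | h
  · exact ⟨p + 2, (mem_transl p _).2 (by omega), (mem_transl q _).2 (by omega)⟩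
  · exact ⟨p + 4, (mem_transl p _).2 (by omega), (mem_transl q _).2 (by omega)⟩
  · exact ⟨p + 4, (mem_transl p _).2 (by omega), (mem_transl q _).2 (by omega)⟩
  · exact ⟨q + 2, (mem_transl p _).2 (by omega), (mem_transl q _).2 (by omega)⟩
  · exact ⟨q + 4, (mem_transl p _).2 (by omega), (mem_transl q _).2 (by omega)⟩
  · exact ⟨q + 4, (mem_transl p _).2 (by omega), (mem_transl q _).2 (by omega)⟩

/-- `f({1,2,…,4n}) = 3n` for every `n ∈ ℕ`. -/
theorem stmt5 (n : ℕ) : fmin (Finset.Icc (1 : ℤ) (4 * n)) = 3 * n := by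
  have hmem : (3 * n : ℕ) ∈ {m : ℕ | ∃ F : Finset ℤ,
      (∀ p ∈ F, Sset.image (fun s => p + s) ⊆ Finset.Icc (1 : ℤ) (4 * n)) ∧
      (∀ p ∈ F, ∀ q ∈ F, p ≠ q →
        Disjoint (Sset.image (fun s => p + s)) (Sset.image (fun s => q + s))) ∧
      (3 * n : ℕ) = (Finset.Icc (1 : ℤ) (4 * n)).card - F.card} := by
    refine ⟨(Finset.range n).image (fun k : ℕ => (4 * (k : ℤ))), ?_, ?_, ?_⟩
    · intro p hp
      simp only [Finset.mem_image, Finset.mem_range] at hp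
      obtain ⟨k, hk, rfl⟩ := hp
      intro x hx
      rw [mem_transl] at hx
      rw [Finset.mem_Icc]
      omega
    · intro p hp q hq hpq
      simp only [Finset.mem_image, Finset.mem_range] at hp hq
      obtain ⟨k, hk, rfl⟩ := hp
      obtain ⟨j, hj, rfl⟩ := hq
      rw [Finset.disjoint_left]
      intro x hx hx'
      rw [mem_transl] at hx hx'
      omega
    · have hcard : ((Finset.range n).image (fun k : ℕ => (4 * (k : ℤ)))).card = n := by
        rw [Finset.card_image_of_injective _ (fun a b h => by omega), Finset.card_range]
      rw [hcard, card_E]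
      omega
  have hlb : ∀ m ∈ {m : ℕ | ∃ F : Finset ℤ,
      (∀ p ∈ F, Sset.image (fun s => p + s) ⊆ Finset.Icc (1 : ℤ) (4 * n)) ∧
      (∀ p ∈ F, ∀ q ∈ F, p ≠ q →
        Disjoint (Sset.image (fun s => p + s)) (Sset.image (fun s => q + s))) ∧
      m = (Finset.Icc (1 : ℤ) (4 * n)).card - F.card}, 3 * n ≤ m := by
    rintro m ⟨F, hsub, hdisj, rfl⟩
    have hbd : ∀ p ∈ F, 0 ≤ p ∧ p ≤ 4 * n - 4 := by
      intro p hp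
      have h1 := hsub p hp ((mem_transl p (p + 1)).2 (by omega))
      have h4 := hsub p hp ((mem_transl p (p + 4)).2 (by omega))
      rw [Finset.mem_Icc] at h1 h4
      omega
    have hFcard : F.card ≤ n := by
      have := Finset.card_le_card_of_injOn (t := Finset.range n) (fun p : ℤ => (p / 4).toNat)
        (by
          intro p hp
          have := hbd p hp
          simp only [Finset.mem_coe, Finset.mem_range]
          show (p / 4).toNat < n
          omega)
        (by
          intro p hp q hq heq
          rw [Finset.mem_coe] at hp hq
          by_contra hne
          have h1 := hbd p hp
          have h2 := hbd q hq
          simp only at heq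
          have hclose : p - q ≤ 3 ∧ q - p ≤ 3 := by omega
          exact not_disjoint_of_close p q hne hclose.1 hclose.2
            (hdisj p hp q hq hne))
      simpa using this
    rw [card_E]
    omega
  exact le_antisymm (Nat.sInf_le hmem) (le_csInf ⟨3 * n, hmem⟩ hlb)
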